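/- Let τ ∈ ℂ with Im τ > 0, −1/2 < Re τ ≤ 1/2 and |τ| ≥ 1, let Γ_τ = {m + n·τ : m, n ∈ ℤ}, and let I : ℂ → ℂ be a fixpoint-free lift of an antiholomorphic involution of the torus ℂ/Γ_τ. Then Γ_τ is a rectangular lattice, i.e. Re τ = 0, and there exists δ ∈ ℂ such that either I(z + δ) − δ − (conj(z) + 1/2) ∈ Γ_τ for all z ∈ ℂ, or I(z + δ) − δ − (−conj(z) + τ/2) ∈ Γ_τ for all z ∈ ℂ. -/

import Mathlib

set_option maxHeartbeats 1000000

open Complex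

private lemma aux_const (ε : ℝ) (hε : 0 < ε) (S : Set ℂ)
    (hsep : ∀ x ∈ S, ∀ y ∈ S, dist x y < ε → x = y)
    (f : ℂ → ℂ) (hf : Continuous f) (hS : ∀ w, f w ∈ S) (w : ℂ) : f w = f 0 := by
  have hopen : IsOpen {v : ℂ | f v = f 0} := by
    rw [isOpen_iff_mem_nhds]
    intro v hv
    have h1 : ∀ᶠ u in nhds v, dist (f u) (f v) < ε :=
      (Metric.tendsto_nhds.mp (hf.tendsto v)) ε hε
    filter_upwards [h1] with u hu
    exact (hsep _ (hS u) _ (hS v) hu).trans hv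
  have hclosed : IsClosed {v : ℂ | f v = f 0} := isClosed_eq hf continuous_const
  rcases isClopen_iff.mp ⟨hclosed, hopen⟩ with h | h
  · exact absurd (Set.eq_empty_iff_forall_notMem.mp h 0) (by simp)
  · exact (h ▸ Set.mem_univ w : w ∈ {v : ℂ | f v = f 0})

open Complex

theorem stmt_9 (τ : ℂ) (hτ : 0 < τ.im)
    (hre : -(1/2) < τ.re ∧ τ.re ≤ 1/2) (habs : 1 ≤ ‖τ‖)
    (Γ : Set ℂ) (hΓ : Γ = {z : ℂ | ∃ m n : ℤ, z = m + n * τ})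
    (I : ℂ → ℂ)
    (hent : Differentiable ℂ (fun z => I (starRingEnd ℂ z)))
    (hper : ∀ z : ℂ, ∀ ω ∈ Γ, I (z + ω) - I z ∈ Γ)
    (hinv : ∀ z : ℂ, I (I z) - z ∈ Γ)
    (hfree : ∀ z : ℂ, I z - z ∉ Γ) :
    τ.re = 0 ∧
    ∃ δ : ℂ, (∀ z : ℂ, I (z + δ) - δ - (starRingEnd ℂ z + 1/2) ∈ Γ) ∨
      (∀ z : ℂ, I (z + δ) - δ - (-starRingEnd ℂ z + τ/2) ∈ Γ) := by
  obtain ⟨hre1, hre2⟩ := hre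
  have hmem : ∀ m n : ℤ, ((m : ℂ) + (n : ℂ) * τ) ∈ Γ := by
    intro m n; rw [hΓ]; exact ⟨m, n, rfl⟩
  have hmem' : ∀ z ∈ Γ, ∃ m n : ℤ, z = (m : ℂ) + (n : ℂ) * τ := by
    intro z hz; rw [hΓ] at hz; exact hz
  set ε : ℝ := min 1 τ.im with hεdef
  have hε : 0 < ε := lt_min one_pos hτ
  have hsep : ∀ x ∈ Γ, ∀ y ∈ Γ, dist x y < ε → x = y := by
    intro x hx y hy hxy
    obtain ⟨m1, n1, rfl⟩ := hmem' x hx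
    obtain ⟨m2, n2, rfl⟩ := hmem' y hy
    have hdiff : (m1 : ℂ) + n1 * τ - ((m2 : ℂ) + n2 * τ)
        = ((m1 - m2 : ℤ) : ℂ) + ((n1 - n2 : ℤ) : ℂ) * τ := by push_cast; ring
    have hdlt : ‖((m1 - m2 : ℤ) : ℂ) + ((n1 - n2 : ℤ) : ℂ) * τ‖ < ε := by
      rw [← hdiff, ← Complex.dist_eq]; exact hxy
    have hn : n1 - n2 = 0 := by
      by_contra hn0
      have him : (((m1 - m2 : ℤ) : ℂ) + ((n1 - n2 : ℤ) : ℂ) * τ).im = ((n1 - n2 : ℤ) : ℝ) * τ.im := by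
        simp
      have h1 : (1 : ℝ) ≤ |((n1 - n2 : ℤ) : ℝ)| := by
        rw [← Int.cast_abs]
        exact_mod_cast Int.one_le_abs hn0
      have h2 : τ.im ≤ |((n1 - n2 : ℤ) : ℝ) * τ.im| := by
        rw [abs_mul, abs_of_pos hτ]
        nlinarith
      have h3 : τ.im ≤ ‖((m1 - m2 : ℤ) : ℂ) + ((n1 - n2 : ℤ) : ℂ) * τ‖ := by
        calc τ.im ≤ |(((m1 - m2 : ℤ) : ℂ) + ((n1 - n2 : ℤ) : ℂ) * τ).im| := by rw [him]; exact h2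
          _ ≤ _ := Complex.abs_im_le_norm _
      have : ε ≤ τ.im := min_le_right _ _
      linarith
    have hm : m1 - m2 = 0 := by
      by_contra hm0
      have hre : ((((m1 - m2 : ℤ) : ℂ) + ((n1 - n2 : ℤ) : ℂ) * τ)).re = ((m1 - m2 : ℤ) : ℝ) := by
        rw [hn]; simp
      have h1 : (1 : ℝ) ≤ |((m1 - m2 : ℤ) : ℝ)| := by
        rw [← Int.cast_abs]; exact_mod_cast Int.one_le_abs hm0
      rw [← hre] at h1
      have h3 := h1.trans (Complex.abs_re_le_norm _)
      have : ε ≤ 1 := min_le_left _ _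
      linarith
    have hmeq : m1 = m2 := by omega
    have hneq : n1 = n2 := by omega
    rw [hmeq, hneq]
  -- stage 2
  set g : ℂ → ℂ := fun w => I (starRingEnd ℂ w) with hgdef
  have hg : Differentiable ℂ g := hent
  have hIg : ∀ z, I z = g (starRingEnd ℂ z) := by
    intro z; rw [hgdef]; simp
  have hper' : ∀ ω ∈ Γ, ∀ w, g (w + starRingEnd ℂ ω) - g w
      = g (starRingEnd ℂ ω) - g 0 := by
    intro ω hω w
    have hcont : Continuous (fun w => g (w + starRingEnd ℂ ω) - g w) :=
      ((hg.continuous.comp (continuous_id.add continuous_const)).sub hg.continuous)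
    have hmemf : ∀ w, g (w + starRingEnd ℂ ω) - g w ∈ Γ := by
      intro w
      have h2 : g (w + starRingEnd ℂ ω) = I (starRingEnd ℂ w + ω) := by
        rw [hgdef]; simp
      rw [h2, hgdef]
      exact hper (starRingEnd ℂ w) ω hω
    have := aux_const ε hε Γ hsep _ hcont hmemf w
    simpa using this
  have hdper : ∀ ω ∈ Γ, ∀ w, deriv g (w + starRingEnd ℂ ω) = deriv g w := by
    intro ω hω w
    have hfun : (fun w => g (w + starRingEnd ℂ ω))
        = fun w => g w + (g (starRingEnd ℂ ω) - g 0) := by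
      funext v
      have := hper' ω hω v
      linear_combination this
    calc deriv g (w + starRingEnd ℂ ω)
        = deriv (fun v => g (v + starRingEnd ℂ ω)) w := (deriv_comp_add_const _ _ _).symm
      _ = deriv (fun v => g v + (g (starRingEnd ℂ ω) - g 0)) w := by rw [hfun]
      _ = deriv g w := by simp
  have hganal : AnalyticOnNhd ℂ g Set.univ := analyticOnNhd_univ_iff_differentiable.mpr hg
  have hg' : Differentiable ℂ (deriv g) := analyticOnNhd_univ_iff_differentiable.mp hganal.deriv
  -- fundamental domain
  set K : Set ℂ := (fun p : ℝ × ℝ => (p.1 : ℂ) + (p.2 : ℂ) * (starRingEnd ℂ τ)) ''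
      (Set.Icc 0 1 ×ˢ Set.Icc 0 1) with hKdef
  have hKcomp : IsCompact K := by
    apply IsCompact.image (isCompact_Icc.prod isCompact_Icc)
    exact (Complex.continuous_ofReal.comp continuous_fst).add
      ((Complex.continuous_ofReal.comp continuous_snd).mul continuous_const)
  have hred : ∀ w : ℂ, ∃ v ∈ K, deriv g w = deriv g v := by
    intro w
    have hτ0 : τ.im ≠ 0 := ne_of_gt hτ
    set t : ℝ := -w.im / τ.im with htdef
    set s : ℝ := w.re - t * τ.re with hsdef
    have hw : w = (s : ℂ) + (t : ℂ) * (starRingEnd ℂ τ) := by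
      apply Complex.ext
      · simp [hsdef]
      · simp [htdef]
        field_simp
    refine ⟨((s - ⌊s⌋ : ℝ) : ℂ) + ((t - ⌊t⌋ : ℝ) : ℂ) * (starRingEnd ℂ τ), ?_, ?_⟩
    · rw [hKdef]
      refine ⟨(s - ⌊s⌋, t - ⌊t⌋), Set.mem_prod.mpr ⟨Set.mem_Icc.mpr ⟨?_, ?_⟩,
        Set.mem_Icc.mpr ⟨?_, ?_⟩⟩, rfl⟩
      · show (0:ℝ) ≤ s - (⌊s⌋:ℝ); linarith [Int.floor_le s]
      · show s - (⌊s⌋:ℝ) ≤ 1; linarith [Int.lt_floor_add_one s]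
      · show (0:ℝ) ≤ t - (⌊t⌋:ℝ); linarith [Int.floor_le t]
      · show t - (⌊t⌋:ℝ) ≤ 1; linarith [Int.lt_floor_add_one t]
    · have hwv : w = (((s - ⌊s⌋ : ℝ) : ℂ) + ((t - ⌊t⌋ : ℝ) : ℂ) * (starRingEnd ℂ τ))
          + starRingEnd ℂ ((⌊s⌋ : ℂ) + (⌊t⌋ : ℂ) * τ) := by
        rw [map_add, map_mul]
        rw [hw]
        push_cast
        simp only [map_intCast]
        push_cast
        ring
      rw [hwv, hdper _ (hmem ⌊s⌋ ⌊t⌋)]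
  have hbdd : Bornology.IsBounded (Set.range (deriv g)) := by
    have h1 : Set.range (deriv g) ⊆ deriv g '' K := by
      rintro x ⟨w, rfl⟩
      obtain ⟨v, hvK, hv⟩ := hred w
      exact ⟨v, hvK, hv.symm⟩
    exact ((hKcomp.image hg'.continuous).isBounded).subset h1
  have hderiv_const : ∀ w, deriv g w = deriv g 0 :=
    fun w => hg'.apply_eq_apply_of_bounded hbdd w 0
  have haff : ∀ w, g w = (deriv g 0) * w + g 0 := by
    intro w
    have hG : Differentiable ℂ (fun w => g w - (deriv g 0) * w) :=
      hg.sub (differentiable_fun_id.const_mul _)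
    have hG' : ∀ x, deriv (fun w => g w - (deriv g 0) * w) x = 0 := by
      intro x
      rw [deriv_fun_sub (hg x) ((differentiable_fun_id.const_mul _) x)]
      rw [deriv_const_mul_field']
      simp [hderiv_const x]
    have h0 := is_const_of_deriv_eq_zero hG hG' w 0
    simp only [mul_zero, sub_zero] at h0
    linear_combination h0
  have hI0 : ∀ z, I z = (deriv g 0) * starRingEnd ℂ z + g 0 := by
    intro z
    rw [hIg z, haff]
  -- ============ stage 3 : algebra ============
  clear hper' hdper hganal hg' hKcomp hred hbdd hderiv_const haff hIg hg hgdef hεdef hKdef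
  obtain ⟨c, b, hI⟩ : ∃ c b : ℂ, ∀ z, I z = c * starRingEnd ℂ z + b := ⟨_, _, hI0⟩
  clear hI0 hent hsep hε
  clear g K ε
  have h1Γ : (1:ℂ) ∈ Γ := by simpa using hmem 1 0
  have hτΓ : τ ∈ Γ := by simpa using hmem 0 1
  have hcΓ : c ∈ Γ := by
    have h := hper 0 1 h1Γ
    have he : I (0+1) - I 0 = c := by rw [hI, hI]; simp
    rwa [he] at h
  have hcτΓ : c * starRingEnd ℂ τ ∈ Γ := by
    have h := hper 0 τ hτΓ
    have he : I (0+τ) - I 0 = c * starRingEnd ℂ τ := by rw [hI, hI]; simp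
    rwa [he] at h
  have hdΓ : c * starRingEnd ℂ b + b ∈ Γ := by
    have h := hinv 0
    have h0 : I 0 = b := by rw [hI]; simp
    have he : I (I 0) - 0 = c * starRingEnd ℂ b + b := by rw [h0, hI]; simp
    rwa [he] at h
  have hΓcount : Γ.Countable := by
    rw [hΓ]
    have hsub : {z : ℂ | ∃ m n : ℤ, z = m + n * τ}
        ⊆ Set.range (fun p : ℤ × ℤ => (p.1:ℂ) + (p.2:ℂ)*τ) := by
      rintro z ⟨m, n, rfl⟩; exact ⟨(m,n), rfl⟩
    exact (Set.countable_range _).mono hsub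
  have hcc : c * starRingEnd ℂ c = 1 := by
    by_contra hne
    have hall : ∀ w : ℂ, w ∈ Γ := by
      intro w
      have hz := hinv ((w - (c * starRingEnd ℂ b + b)) / (c * starRingEnd ℂ c - 1))
      set z := (w - (c * starRingEnd ℂ b + b)) / (c * starRingEnd ℂ c - 1) with hzdef
      have hkey : (c * starRingEnd ℂ c - 1) * z = w - (c * starRingEnd ℂ b + b) := by
        rw [hzdef, mul_comm, div_mul_cancel₀ _ (sub_ne_zero.mpr hne)]
      have he : I (I z) - z = w := by
        rw [hI z, hI]
        simp only [map_add, map_mul, Complex.conj_conj]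
        linear_combination hkey
      rwa [he] at hz
    have huniv : (Set.univ : Set ℂ).Countable := hΓcount.mono (fun w _ => hall w)
    have : Countable ℂ := Set.countable_univ_iff.mp huniv
    have : Countable ℝ := Function.Injective.countable Complex.ofReal_injective
    exact (not_countable : ¬Countable ℝ) this
  -- uniqueness of coefficients
  have huniq : ∀ m n m' n' : ℤ, (m:ℂ) + (n:ℂ)*τ = (m':ℂ) + (n':ℂ)*τ → m = m' ∧ n = n' := by
    intro m n m' n' h
    have him := congrArg Complex.im h
    simp only [Complex.add_im, Complex.intCast_im, Complex.mul_im, Complex.intCast_re,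
      Complex.intCast_im, zero_add, zero_mul, add_zero] at him
    have hn : (n:ℝ) = (n':ℝ) := by
      have := mul_right_cancel₀ (ne_of_gt hτ) him
      exact this
    have hnn : n = n' := by exact_mod_cast hn
    subst hnn
    have hmm : (m:ℂ) = (m':ℂ) := by linear_combination h
    exact ⟨by exact_mod_cast hmm, rfl⟩
  -- fixpoint lemma
  have hfix : ∀ γ : ℂ, γ ∈ Γ → c * starRingEnd ℂ (b - γ) = -(b - γ) → False := by
    intro γ hγ hu
    refine hfree ((b - γ)/2) ?_
    have h2 : starRingEnd ℂ ((b - γ)/2) = starRingEnd ℂ (b - γ) / 2 := by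
      rw [map_div₀, map_ofNat]
    have he : I ((b - γ)/2) - (b - γ)/2 = γ := by
      rw [hI, h2]; linear_combination hu/2
    rw [he]; exact hγ
  -- |c| analysis
  have hnsc : Complex.normSq c = 1 := by
    have h := hcc
    rw [Complex.mul_conj] at h
    exact_mod_cast h
  have hnsτ : 1 ≤ τ.re^2 + τ.im^2 := by
    have h1 : 1 ≤ (‖τ‖)^2 := by nlinarith
    rw [Complex.sq_norm, Complex.normSq_apply] at h1
    nlinarith [h1]
  have him2 : (3:ℝ)/4 ≤ τ.im^2 := by nlinarith [hre1, hre2, hnsτ]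
  obtain ⟨cm, cn, hceq⟩ := hmem' c hcΓ
  have hcre : c.re = (cm:ℝ) + (cn:ℝ)*τ.re := by rw [hceq]; simp
  have hcim : c.im = (cn:ℝ)*τ.im := by rw [hceq]; simp
  have hkey : ((cm:ℝ) + (cn:ℝ)*τ.re)^2 + ((cn:ℝ)*τ.im)^2 = 1 := by
    have h := hnsc
    rw [Complex.normSq_apply, hcre, hcim] at h
    nlinarith [h]
  -- derivative of d-representation
  obtain ⟨dm, dn, hdeq⟩ := hmem' _ hdΓ
  have hdd : c * starRingEnd ℂ ((dm:ℂ) + (dn:ℂ)*τ) = (dm:ℂ) + (dn:ℂ)*τ := by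
    rw [← hdeq]
    simp only [map_add, map_mul, Complex.conj_conj]
    linear_combination b * hcc
  -- bound on cn
  have hcn3 : cn = -1 ∨ cn = 0 ∨ cn = 1 := by
    have hcn2 : ((cn:ℝ))^2 * τ.im^2 ≤ 1 := by nlinarith [hkey, sq_nonneg ((cm:ℝ) + (cn:ℝ)*τ.re)]
    have hb : -1 ≤ cn ∧ cn ≤ 1 := by
      constructor <;> by_contra h <;> push_neg at h
      · have h2 : (cn:ℝ) ≤ -2 := by exact_mod_cast (by omega : cn ≤ -2)
        nlinarith
      · have h2 : (2:ℝ) ≤ (cn:ℝ) := by exact_mod_cast (by omega : 2 ≤ cn)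
        nlinarith
    omega
  rcases hcn3 with hcn | hcn | hcn
  · -- cn = -1 : c = -τ or c = 1 - τ
    subst hcn
    push_cast at hkey
    have hcm01 : cm = 0 ∨ cm = 1 := by
      have hle : ((cm:ℝ) - τ.re)^2 ≤ τ.re^2 := by nlinarith [hkey, hnsτ]
      have l1 : (cm:ℝ) ≤ 1 := by nlinarith [hre1, hre2, sq_nonneg ((cm:ℝ) - 1)]
      have l2 : -1 < (cm:ℝ) := by nlinarith [hre1, hre2, sq_nonneg ((cm:ℝ) + 1)]
      have l1' : cm ≤ 1 := by exact_mod_cast l1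
      have l2' : -1 < cm := by exact_mod_cast l2
      omega
    rcases hcm01 with hcm | hcm
    · -- c = -τ  : contradiction
      subst hcm
      have hc1 : c = -τ := by rw [hceq]; push_cast; ring
      have hns1 : Complex.normSq τ = 1 := by rwa [hc1, Complex.normSq_neg] at hnsc
      have hττ : τ * starRingEnd ℂ τ = 1 := by
        rw [Complex.mul_conj, hns1]; norm_num
      rw [hc1] at hdd hdeq
      simp only [map_add, map_mul, map_intCast] at hdd
      have h1 : ((-dn:ℤ):ℂ) + ((-dm:ℤ):ℂ)*τ = (dm:ℂ) + (dn:ℂ)*τ := by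
        push_cast
        linear_combination hdd + (dn:ℂ)*hττ
      obtain ⟨e1, e2⟩ := huniq _ _ _ _ h1
      have hdn2 : dn = -dm := by omega
      rw [hdn2] at hdeq
      push_cast at hdeq
      exact (hfix ((dm:ℤ):ℂ) (by simpa using hmem dm 0) (by
        rw [hc1]
        simp only [map_sub, map_intCast]
        linear_combination hdeq)).elim
    · -- c = 1 - τ : contradiction
      subst hcm
      push_cast at hkey
      have hc1 : c = 1 - τ := by rw [hceq]; push_cast; ring
      have hre_half : τ.re = 1/2 := by nlinarith [hkey, hnsτ, hre2]
      have him34 : τ.im^2 = 3/4 := by nlinarith [hkey]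
      have hconjτ : starRingEnd ℂ τ = 1 - τ := by
        apply Complex.ext
        · simp [hre_half]; norm_num [hre_half]
        · simp
      have hprod : τ * starRingEnd ℂ τ = 1 := by
        rw [Complex.mul_conj, show Complex.normSq τ = 1 by
          rw [Complex.normSq_apply]; nlinarith [hre_half, him34]]
        norm_num
      have hτ2 : τ^2 = τ - 1 := by linear_combination τ*hconjτ - hprod
      rw [hc1] at hdd hdeq
      simp only [map_add, map_mul, map_intCast, hconjτ] at hdd
      have h1 : ((dm:ℤ):ℂ) + ((-(dm+dn):ℤ):ℂ)*τ = (dm:ℂ) + (dn:ℂ)*τ := by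
        push_cast
        linear_combination hdd - (dn:ℂ)*hτ2
      obtain ⟨e1, e2⟩ := huniq _ _ _ _ h1
      have hdm2 : dm = -2*dn := by omega
      rw [hdm2] at hdeq
      push_cast at hdeq
      exact (hfix ((-dn:ℤ):ℂ) (by simpa using hmem (-dn) 0) (by
        rw [hc1]
        simp only [map_sub, map_intCast]
        push_cast
        linear_combination hdeq)).elim
  · -- cn = 0 : c = 1 or c = -1
    subst hcn
    push_cast at hkey
    have hcm11 : cm = 1 ∨ cm = -1 := by
      have l1 : (cm:ℝ) ≤ 1 := by nlinarith
      have l2 : -1 ≤ (cm:ℝ) := by nlinarith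
      have l1' : cm ≤ 1 := by exact_mod_cast l1
      have l2' : -1 ≤ cm := by exact_mod_cast l2
      have l3 : cm ≠ 0 := by
        rintro rfl
        norm_num at hkey
      omega
    rcases hcm11 with hcm | hcm
    · -- c = 1
      subst hcm
      have hc1 : c = 1 := by rw [hceq]; push_cast; ring
      have hconjτΓ : starRingEnd ℂ τ ∈ Γ := by
        have h := hcτΓ; rwa [hc1, one_mul] at h
      obtain ⟨tm, tn, hct⟩ := hmem' _ hconjτΓ
      have him := congrArg Complex.im hct
      simp only [Complex.conj_im, Complex.add_im, Complex.intCast_im, Complex.mul_im,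
        Complex.intCast_re, zero_add, zero_mul, add_zero] at him
      have htn : tn = -1 := by
        have h2 : ((tn:ℝ) + 1) * τ.im = 0 := by linarith
        rcases mul_eq_zero.mp h2 with h3 | h3
        · exact_mod_cast (by linarith : (tn:ℝ) = -1)
        · exact absurd h3 (ne_of_gt hτ)
      subst htn
      have hct' : starRingEnd ℂ τ = (tm:ℂ) - τ := by rw [hct]; push_cast; ring
      have hrm := congrArg Complex.re hct
      simp only [Complex.conj_re, Complex.add_re, Complex.intCast_re, Complex.mul_re,
        Complex.intCast_im, zero_mul, sub_zero, add_zero] at hrm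
      push_cast at hrm
      -- hrm should say : τ.re = tm + (-1)*τ.re
      have hdb : starRingEnd ℂ b + b = (dm:ℂ) + (dn:ℂ)*τ := by
        rw [← hdeq, hc1]; ring
      have hcdb := congrArg (starRingEnd ℂ) hdb
      simp only [map_add, map_mul, map_intCast, Complex.conj_conj, hct'] at hcdb
      have h1 : ((dm:ℤ):ℂ) + ((dn:ℤ):ℂ)*τ = ((dm + dn*tm:ℤ):ℂ) + ((-dn:ℤ):ℂ)*τ := by
        push_cast
        linear_combination hcdb - hdb
      have hdn0 : dn = 0 := by have := (huniq _ _ _ _ h1).2; omega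
      rw [hdn0] at hdb
      push_cast at hdb
      -- hdb : conj b + b = dm
      have htm01 : tm = 0 ∨ tm = 1 := by
        have l1 : -1 < (tm:ℝ) := by nlinarith [hre1, hre2]
        have l2 : (tm:ℝ) ≤ 1 := by nlinarith [hre1, hre2]
        have l1' : -1 < tm := by exact_mod_cast l1
        have l2' : tm ≤ 1 := by exact_mod_cast l2
        omega
      rcases htm01 with htm | htm
      · -- τ.re = 0 : GOOD case, conclusion Or.inl
        have hre0 : τ.re = 0 := by
          rw [htm] at hrm; push_cast at hrm; linarith
        refine ⟨hre0, ?_⟩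
        rcases Int.even_or_odd dm with ⟨k, hk⟩ | ⟨k, hk⟩
        · -- even dm : contradiction
          have hdmk : (dm:ℂ) = (k:ℂ) + (k:ℂ) := by exact_mod_cast hk
          exact (hfix ((k:ℤ):ℂ) (by simpa using hmem k 0) (by
            rw [hc1, one_mul]
            simp only [map_sub, map_intCast]
            linear_combination hdb + hdmk)).elim
        · -- odd dm : δ := (b - conj b)/4
          refine ⟨(b - starRingEnd ℂ b)/4, Or.inl ?_⟩
          intro z
          have hdmk : (dm:ℂ) = 2*(k:ℂ) + 1 := by exact_mod_cast hk
          have hgoal : I (z + (b - starRingEnd ℂ b)/4) - (b - starRingEnd ℂ b)/4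
              - (starRingEnd ℂ z + 1/2) = ((k:ℤ):ℂ) := by
            rw [hI, hc1, one_mul]
            simp only [map_add, map_div₀, map_sub, Complex.conj_conj, map_ofNat]
            push_cast
            linear_combination hdb/2 + hdmk/2
          rw [hgoal]
          simpa using hmem k 0
      · -- tm = 1 : τ.re = 1/2 : contradiction
        have htm1 : ((tm:ℤ):ℂ) = 1 := by rw [htm]; norm_num
        exact (hfix ((dm:ℂ)*τ) (by simpa using hmem 0 dm) (by
          rw [hc1, one_mul]
          simp only [map_sub, map_mul, map_intCast, hct']
          linear_combination hdb - (dm:ℂ)*htm1)).elim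
    · -- c = -1
      subst hcm
      have hc1 : c = -1 := by rw [hceq]; push_cast; ring
      have hconjτΓ : -starRingEnd ℂ τ ∈ Γ := by
        have h := hcτΓ; rwa [hc1, neg_one_mul] at h
      obtain ⟨tm, tn, hct⟩ := hmem' _ hconjτΓ
      have him := congrArg Complex.im hct
      simp only [Complex.neg_im, Complex.conj_im, Complex.add_im, Complex.intCast_im,
        Complex.mul_im, Complex.intCast_re, zero_add, zero_mul, add_zero, neg_neg] at him
      have htn : tn = 1 := by
        have h2 : ((tn:ℝ) - 1) * τ.im = 0 := by linarith
        rcases mul_eq_zero.mp h2 with h3 | h3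
        · exact_mod_cast (by linarith : (tn:ℝ) = 1)
        · exact absurd h3 (ne_of_gt hτ)
      subst htn
      have hct' : starRingEnd ℂ τ = -(tm:ℂ) - τ := by
        have := hct
        push_cast at this ⊢
        linear_combination -this
      have hrm := congrArg Complex.re hct
      simp only [Complex.neg_re, Complex.conj_re, Complex.add_re, Complex.intCast_re,
        Complex.mul_re, Complex.intCast_im, zero_mul, sub_zero, add_zero] at hrm
      push_cast at hrm
      -- hrm : -τ.re = tm + 1*τ.re
      have hdb : b - starRingEnd ℂ b = (dm:ℂ) + (dn:ℂ)*τ := by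
        rw [← hdeq, hc1]; ring
      have hcdb := congrArg (starRingEnd ℂ) hdb
      simp only [map_sub, map_add, map_mul, map_intCast, Complex.conj_conj, hct'] at hcdb
      have h1 : ((dm:ℤ):ℂ) + ((dn:ℤ):ℂ)*τ = ((-dm + dn*tm:ℤ):ℂ) + ((dn:ℤ):ℂ)*τ := by
        push_cast
        linear_combination -hdb - hcdb
      have hdmtn : 2*dm = dn*tm := by have := (huniq _ _ _ _ h1).1; omega
      have htm01 : tm = 0 ∨ tm = -1 := by
        have l1 : (tm:ℝ) ≤ 1 := by nlinarith [hre1, hre2]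
        have l2 : -1 ≤ (tm:ℝ) := by nlinarith [hre1, hre2]
        have l3 : (tm:ℝ) < 1 := by nlinarith [hre1, hre2]
        have l2' : -1 ≤ tm := by exact_mod_cast l2
        have l3' : tm < 1 := by exact_mod_cast l3
        omega
      rcases htm01 with htm | htm
      · -- τ.re = 0 : GOOD case, conclusion Or.inr
        have hre0 : τ.re = 0 := by
          rw [htm] at hrm; push_cast at hrm; linarith
        have hdm0 : dm = 0 := by rw [htm] at hdmtn; omega
        rw [hdm0] at hdb
        push_cast at hdb
        -- hdb : b - conj b = dn*τ
        refine ⟨hre0, ?_⟩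
        rcases Int.even_or_odd dn with ⟨k, hk⟩ | ⟨k, hk⟩
        · -- even dn : contradiction
          have hdnk : (dn:ℂ) = (k:ℂ) + (k:ℂ) := by exact_mod_cast hk
          have hctm : starRingEnd ℂ τ = -τ := by rw [hct', htm]; push_cast; ring
          exact (hfix ((k:ℂ)*τ) (by simpa using hmem 0 k) (by
            rw [hc1]
            simp only [map_sub, map_mul, map_intCast, hctm]
            linear_combination hdb + τ*hdnk)).elim
        · -- odd dn : δ := (b + conj b)/4
          refine ⟨(b + starRingEnd ℂ b)/4, Or.inr ?_⟩
          intro z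
          have hdnk : (dn:ℂ) = 2*(k:ℂ) + 1 := by exact_mod_cast hk
          have hgoal : I (z + (b + starRingEnd ℂ b)/4) - (b + starRingEnd ℂ b)/4
              - (-starRingEnd ℂ z + τ/2) = (k:ℂ)*τ := by
            rw [hI, hc1]
            simp only [map_add, map_div₀, Complex.conj_conj, map_ofNat]
            linear_combination hdb/2 + τ*hdnk/2
          rw [hgoal]
          simpa using hmem 0 k
      · -- tm = -1 : τ.re = 1/2 : contradiction
        have hdn2 : dn = -2*dm := by rw [htm] at hdmtn; omega
        rw [hdn2] at hdb
        push_cast at hdb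
        have hctm : starRingEnd ℂ τ = 1 - τ := by rw [hct', htm]; push_cast; ring
        exact (hfix (((-dm:ℤ):ℂ)*τ) (by simpa using hmem 0 (-dm)) (by
          rw [hc1]
          simp only [map_sub, map_mul, map_intCast, hctm]
          push_cast
          linear_combination hdb)).elim
  · -- cn = 1 : c = τ or c = τ - 1
    subst hcn
    push_cast at hkey
    have hcm01 : cm = -1 ∨ cm = 0 := by
      have hle : ((cm:ℝ) + τ.re)^2 ≤ τ.re^2 := by nlinarith [hkey, hnsτ]
      have l1 : (cm:ℝ) < 1 := by nlinarith [hle, hre1, hre2, sq_nonneg ((cm:ℝ) + 1)]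
      have l2 : -2 < (cm:ℝ) := by nlinarith [hle, hre1, hre2, sq_nonneg ((cm:ℝ) + 2)]
      have l1' : cm < 1 := by exact_mod_cast l1
      have l2' : (-2:ℤ) < cm := by exact_mod_cast l2
      omega
    rcases hcm01 with hcm | hcm
    · -- c = τ - 1 : contradiction
      subst hcm
      push_cast at hkey
      have hc1 : c = τ - 1 := by rw [hceq]; push_cast; ring
      have hre_half : τ.re = 1/2 := by nlinarith [hkey, hnsτ, hre2]
      have him34 : τ.im^2 = 3/4 := by nlinarith [hkey]
      have hconjτ : starRingEnd ℂ τ = 1 - τ := by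
        apply Complex.ext
        · simp [hre_half]; norm_num [hre_half]
        · simp
      have hprod : τ * starRingEnd ℂ τ = 1 := by
        rw [Complex.mul_conj, show Complex.normSq τ = 1 by
          rw [Complex.normSq_apply]; nlinarith [hre_half, him34]]
        norm_num
      have hτ2 : τ^2 = τ - 1 := by linear_combination τ*hconjτ - hprod
      rw [hc1] at hdd hdeq
      simp only [map_add, map_mul, map_intCast, hconjτ] at hdd
      have h1 : ((-dm:ℤ):ℂ) + ((dm+dn:ℤ):ℂ)*τ = (dm:ℂ) + (dn:ℂ)*τ := by
        push_cast
        linear_combination hdd + (dn:ℂ)*hτ2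
      obtain ⟨e1, e2⟩ := huniq _ _ _ _ h1
      have hdm0 : dm = 0 := by omega
      rw [hdm0] at hdeq
      push_cast at hdeq
      exact (hfix ((dn:ℤ):ℂ) (by simpa using hmem dn 0) (by
        rw [hc1]
        simp only [map_sub, map_intCast]
        linear_combination hdeq)).elim
    · -- c = τ : contradiction
      subst hcm
      have hc1 : c = τ := by rw [hceq]; push_cast; ring
      have hns1 : Complex.normSq τ = 1 := by rwa [hc1] at hnsc
      have hττ : τ * starRingEnd ℂ τ = 1 := by
        rw [Complex.mul_conj, hns1]; norm_num
      rw [hc1] at hdd hdeq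
      simp only [map_add, map_mul, map_intCast] at hdd
      have h1 : ((dn:ℤ):ℂ) + ((dm:ℤ):ℂ)*τ = (dm:ℂ) + (dn:ℂ)*τ := by
        push_cast
        linear_combination hdd - (dn:ℂ)*hττ
      obtain ⟨e1, e2⟩ := huniq _ _ _ _ h1
      have hdn2 : dn = dm := by omega
      rw [hdn2] at hdeq
      push_cast at hdeq
      exact (hfix ((dm:ℤ):ℂ) (by simpa using hmem dm 0) (by
        rw [hc1]
        simp only [map_sub, map_intCast]
        linear_combination hdeq)).elim
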